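/- Let 0 ≤ ε ≤ 1/2, let t ≥ 0, and let f, g : {0,1}^n → {0,1}^k be functions whose output distributions (under a uniformly random input) have min-entropy t, i.e. Pr_x[f(x) = z] ≤ 2^{-t} and Pr_x[g(x) = z] ≤ 2^{-t} for every z ∈ {0,1}^k. Then Pr_{(x,y)_ε}[f(x) = g(y)] ≤ 2^{-tε/(1-ε)}. -/

import Mathlib

open Classical

/-- The weight of a pair `(x, y)` under the distribution `(x,y)_ε`. -/
noncomputable def pairWeight (ε : ℝ) {n : ℕ} (x y : Fin n → Bool) : ℝ :=
  ∏ i, if x i = y i then (1 - ε) / 2 else ε / 2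

/-- `Pr_{(x,y)_ε}[P x y]`. -/
noncomputable def prPair (ε : ℝ) {n : ℕ}
    (P : (Fin n → Bool) → (Fin n → Bool) → Prop) : ℝ :=
  ∑ x : Fin n → Bool, ∑ y : Fin n → Bool, if P x y then pairWeight ε x y else 0

/-- The output distribution of `f` on a uniformly random input. -/
noncomputable def outDist {n k : ℕ} (f : (Fin n → Bool) → (Fin k → Bool))
    (z : Fin k → Bool) : ℝ :=
  (∑ x : Fin n → Bool, if f x = z then (1 : ℝ) else 0) / 2 ^ n

lemma aux_two_le (r u v : ℝ) (hr : r ≤ 0) (hu : 0 < u) (hv : 0 < v) (huv : u * v ≤ 1) :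
    2 ≤ u ^ r + v ^ r := by
  have huv0 : 0 < u * v := mul_pos hu hv
  have h2 : (1:ℝ) ≤ (u*v) ^ (r/2) :=
    Real.one_le_rpow_of_pos_of_le_one_of_nonpos huv0 huv (by linarith)
  have h3 : u ^ r * v ^ r = ((u*v) ^ (r/2))^2 := by
    rw [← Real.mul_rpow hu.le hv.le, ← Real.rpow_natCast ((u*v)^(r/2)) 2,
      ← Real.rpow_mul huv0.le]
    norm_num
  nlinarith [sq_nonneg (u^r - v^r), Real.rpow_pos_of_pos hu r, Real.rpow_pos_of_pos hv r,
    sq_nonneg ((u*v)^(r/2) - 1)]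

lemma step1 (q : ℝ) (hq0 : 0 ≤ q) (hq1 : q ≤ 1) {x : ℝ} (hx : x ∈ Set.Icc (0:ℝ) 1) :
    2*q*x ≤ (1+x)^q - (1-x)^q := by
  rcases eq_or_lt_of_le hq0 with rfl|hq
  · simp
  set h : ℝ → ℝ := fun x => (1+x)^q - (1-x)^q - 2*q*x with hh
  have hd : ∀ y ∈ Set.Ioo (0:ℝ) 1,
      HasDerivAt h (q*(1+y)^(q-1)*1 - q*(1-y)^(q-1)*(-1) - 2*q) y := by
    intro y hy
    have d1 : HasDerivAt (fun z : ℝ => (1+z)^q) (q*(1+y)^(q-1)*1) y :=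
      (Real.hasDerivAt_rpow_const (Or.inl (by nlinarith [hy.1] : (1:ℝ)+y ≠ 0))).comp y
        ((hasDerivAt_id y).const_add 1)
    have d2 : HasDerivAt (fun z : ℝ => (1-z)^q) (q*(1-y)^(q-1)*(-1)) y :=
      (Real.hasDerivAt_rpow_const (Or.inl (by nlinarith [hy.2] : (1:ℝ)-y ≠ 0))).comp y
        ((hasDerivAt_id y).const_sub 1)
    have d3 : HasDerivAt (fun z : ℝ => 2*q*z) (2*q) y := by
      simpa using (hasDerivAt_id y).const_mul (2*q)
    exact (d1.sub d2).sub d3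
  have hcont : ContinuousOn h (Set.Icc 0 1) := by
    apply ContinuousOn.sub
    apply ContinuousOn.sub
    · exact ((continuous_const.add continuous_id).continuousOn).rpow_const
        (fun z _ => Or.inr hq0)
    · exact ((continuous_const.sub continuous_id).continuousOn).rpow_const
        (fun z _ => Or.inr hq0)
    · exact (continuous_const.mul continuous_id).continuousOn
  have hmono : MonotoneOn h (Set.Icc 0 1) := by
    apply monotoneOn_of_deriv_nonneg (convex_Icc _ _) hcont
    · rw [interior_Icc]
      exact fun y hy => (hd y hy).differentiableAt.differentiableWithinAt
    · rw [interior_Icc]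
      intro y hy
      rw [(hd y hy).deriv]
      have key : 2 ≤ (1+y)^(q-1) + (1-y)^(q-1) :=
        aux_two_le (q-1) (1+y) (1-y) (by linarith) (by nlinarith [hy.1]) (by linarith [hy.2])
          (by nlinarith [hy.1, hy.2])
      nlinarith [key, hq]
  have h0 : h 0 = 0 := by norm_num [hh]
  have := hmono (Set.mem_Icc.mpr ⟨le_refl 0, zero_le_one⟩) hx hx.1
  rw [h0] at this
  simp only [hh] at this
  linarith

lemma step2 (p : ℝ) (hp1 : 1 ≤ p) (hp2 : p ≤ 2) {x : ℝ} (hx : x ∈ Set.Icc (0:ℝ) 1) :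
    2 + p*(p-1)*x^2 ≤ (1+x)^p + (1-x)^p := by
  set h : ℝ → ℝ := fun x => (1+x)^p + (1-x)^p - 2 - p*(p-1)*x^2 with hh
  have hd : ∀ y ∈ Set.Ioo (0:ℝ) 1,
      HasDerivAt h (p*(1+y)^(p-1)*1 + p*(1-y)^(p-1)*(-1) - 0 - p*(p-1)*(2*y)) y := by
    intro y hy
    have d1 : HasDerivAt (fun z : ℝ => (1+z)^p) (p*(1+y)^(p-1)*1) y :=
      (Real.hasDerivAt_rpow_const (Or.inl (by nlinarith [hy.1] : (1:ℝ)+y ≠ 0))).comp y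
        ((hasDerivAt_id y).const_add 1)
    have d2 : HasDerivAt (fun z : ℝ => (1-z)^p) (p*(1-y)^(p-1)*(-1)) y :=
      (Real.hasDerivAt_rpow_const (Or.inl (by nlinarith [hy.2] : (1:ℝ)-y ≠ 0))).comp y
        ((hasDerivAt_id y).const_sub 1)
    have d3 : HasDerivAt (fun z : ℝ => p*(p-1)*z^2) (p*(p-1)*(2*y)) y := by
      have : HasDerivAt (fun z : ℝ => z^2) (2*y) y := by
        simpa using hasDerivAt_pow 2 y
      simpa [mul_assoc] using this.const_mul (p*(p-1))
    have d4 : HasDerivAt (fun _ : ℝ => (2:ℝ)) 0 y := hasDerivAt_const y 2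
    exact ((d1.add d2).sub d4).sub d3
  have hcont : ContinuousOn h (Set.Icc 0 1) := by
    apply ContinuousOn.sub
    apply ContinuousOn.sub
    apply ContinuousOn.add
    · exact ((continuous_const.add continuous_id).continuousOn).rpow_const
        (fun z _ => Or.inr (by linarith))
    · exact ((continuous_const.sub continuous_id).continuousOn).rpow_const
        (fun z _ => Or.inr (by linarith))
    · exact continuousOn_const
    · exact (continuous_const.mul (continuous_pow 2)).continuousOn
  have hmono : MonotoneOn h (Set.Icc 0 1) := by
    apply monotoneOn_of_deriv_nonneg (convex_Icc _ _) hcont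
    · rw [interior_Icc]
      exact fun y hy => (hd y hy).differentiableAt.differentiableWithinAt
    · rw [interior_Icc]
      intro y hy
      rw [(hd y hy).deriv]
      have key : 2*(p-1)*y ≤ (1+y)^(p-1) - (1-y)^(p-1) :=
        step1 (p-1) (by linarith) (by linarith) ⟨hy.1.le, hy.2.le⟩
      nlinarith [key, hp1]
  have h0 : h 0 = 0 := by norm_num [hh]
  have := hmono (Set.mem_Icc.mpr ⟨le_refl 0, zero_le_one⟩) hx hx.1
  rw [h0] at this
  simp only [hh] at this
  linarith

lemma step3 (p : ℝ) (hp1 : 1 ≤ p) (hp2 : p ≤ 2) {x : ℝ} (hx : x ∈ Set.Icc (0:ℝ) 1) :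
    (1+(p-1)*x^2)^(p/2) ≤ ((1+x)^p + (1-x)^p)/2 := by
  have hx2 : 0 ≤ (p-1)*x^2 := mul_nonneg (by linarith) (sq_nonneg _)
  have hbern : (1+(p-1)*x^2)^(p/2) ≤ 1 + (p/2)*((p-1)*x^2) := by
    have := Real.geom_mean_le_arith_mean2_weighted (by linarith : (0:ℝ) ≤ p/2)
      (by linarith : (0:ℝ) ≤ 1 - p/2) (by linarith : (0:ℝ) ≤ 1+(p-1)*x^2)
      (zero_le_one) (by ring)
    calc (1+(p-1)*x^2)^(p/2) = (1+(p-1)*x^2)^(p/2) * 1^(1-p/2) := by simp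
      _ ≤ p/2*(1+(p-1)*x^2) + (1-p/2)*1 := this
      _ = 1 + (p/2)*((p-1)*x^2) := by ring
  have := step2 p hp1 hp2 hx
  linarith

lemma le_of_sq_le_sq' (x y : ℝ) (hy : 0 ≤ y) (h : x^2 ≤ y^2) : x ≤ y := by
  nlinarith [sq_nonneg (x+y), sq_nonneg (x-y)]

/-- one-sided norm bound -/
lemma quad (ε : ℝ) (hε0 : 0 ≤ ε) (hε1 : ε ≤ 1/2) (u0 u1 : ℝ) (h0 : 0 ≤ u0) (h1 : 0 ≤ u1)
    (hle : u1 ≤ u0) :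
    ((u0+u1)/2)^2 + (1-2*ε)*((u0-u1)/2)^2
      ≤ (((u0^(2-2*ε)+u1^(2-2*ε))/2)^(1/(2-2*ε)))^2 := by
  set p : ℝ := 2-2*ε with hp
  have hp1 : 1 ≤ p := by rw [hp]; linarith
  have hp2 : p ≤ 2 := by rw [hp]; linarith
  have hppos : 0 < p := by linarith
  set a : ℝ := (u0+u1)/2 with ha
  set b : ℝ := (u0-u1)/2 with hb
  rcases eq_or_lt_of_le (by linarith : (0:ℝ) ≤ a) with haz|hapos
  · have hu0 : u0 = 0 := by simp [ha] at haz; linarith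
    have hu1 : u1 = 0 := by simp [ha] at haz; linarith
    rw [hu0, hu1]
    have : ((0:ℝ)^p + 0^p)/2 = 0 := by rw [Real.zero_rpow (by linarith)]; norm_num
    rw [this, Real.zero_rpow (by positivity)]
    norm_num [ha, hb, hu0, hu1]
  · set x : ℝ := b/a with hxdef
    have hbnn : 0 ≤ b := by rw [hb]; linarith
    have hba : b ≤ a := by rw [hb, ha]; linarith
    have hx0 : 0 ≤ x := div_nonneg hbnn hapos.le
    have hx1 : x ≤ 1 := (div_le_one hapos).mpr hba
    have hu0 : u0 = a*(1+x) := by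
      rw [hxdef, mul_add, mul_one, mul_div_cancel₀ _ hapos.ne', ha, hb]; ring
    have hu1 : u1 = a*(1-x) := by
      rw [hxdef, mul_sub, mul_one, mul_div_cancel₀ _ hapos.ne', ha, hb]; ring
    have h1x : (0:ℝ) ≤ 1 + x := by linarith
    have h1x' : (0:ℝ) ≤ 1 - x := by linarith
    set D : ℝ := ((1+x)^p + (1-x)^p)/2 with hD
    have hDnn : 0 ≤ D := by
      have := Real.rpow_nonneg h1x p
      have := Real.rpow_nonneg h1x' p
      rw [hD]; linarith
    have hsum : (u0^p + u1^p)/2 = a^p * D := by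
      rw [hu0, hu1, Real.mul_rpow hapos.le h1x, Real.mul_rpow hapos.le h1x', hD]; ring
    have hrw : ((u0^p + u1^p)/2)^(1/p) = a * D^(1/p) := by
      rw [hsum, Real.mul_rpow (Real.rpow_nonneg hapos.le p) hDnn, ← Real.rpow_mul hapos.le,
        mul_one_div_cancel hppos.ne', Real.rpow_one]
    have hkey : 1 + (p-1)*x^2 ≤ D^(2/p) := by
      have hs3 : (1+(p-1)*x^2)^(p/2) ≤ D := step3 p hp1 hp2 ⟨hx0, hx1⟩
      have hbase : (0:ℝ) ≤ 1+(p-1)*x^2 := by nlinarith [sq_nonneg x]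
      have := Real.rpow_le_rpow (Real.rpow_nonneg hbase _) hs3 (by positivity : (0:ℝ) ≤ 2/p)
      rwa [← Real.rpow_mul hbase, div_mul_div_comm, mul_comm p 2, div_self (by positivity : (2*p) ≠ 0),
        Real.rpow_one] at this
    have hD2 : (D^(1/p))^2 = D^(2/p) := by
      rw [← Real.rpow_natCast (D^(1/p)) 2, ← Real.rpow_mul hDnn]
      norm_num
      rw [inv_mul_eq_div]
    calc a^2 + (1-2*ε)*b^2 = a^2 * (1 + (p-1)*x^2) := by
          have : b = a * x := by rw [hxdef, mul_div_cancel₀ _ hapos.ne']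
          rw [this, hp]; ring
      _ ≤ a^2 * D^(2/p) := by
          apply mul_le_mul_of_nonneg_left hkey (sq_nonneg a)
      _ = (a * D^(1/p))^2 := by rw [mul_pow, hD2]
      _ = (((u0^p + u1^p)/2)^(1/p))^2 := by rw [hrw]

lemma quad' (ε : ℝ) (hε0 : 0 ≤ ε) (hε1 : ε ≤ 1/2) (u0 u1 : ℝ) (h0 : 0 ≤ u0) (h1 : 0 ≤ u1) :
    ((u0+u1)/2)^2 + (1-2*ε)*((u0-u1)/2)^2
      ≤ (((u0^(2-2*ε)+u1^(2-2*ε))/2)^(1/(2-2*ε)))^2 := by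
  rcases le_total u1 u0 with h|h
  · exact quad ε hε0 hε1 u0 u1 h0 h1 h
  · have := quad ε hε0 hε1 u1 u0 h1 h0 h
    calc ((u0+u1)/2)^2 + (1-2*ε)*((u0-u1)/2)^2
        = ((u1+u0)/2)^2 + (1-2*ε)*((u1-u0)/2)^2 := by ring
      _ ≤ (((u1^(2-2*ε)+u0^(2-2*ε))/2)^(1/(2-2*ε)))^2 := this
      _ = (((u0^(2-2*ε)+u1^(2-2*ε))/2)^(1/(2-2*ε)))^2 := by rw [add_comm]

lemma onebit (ε : ℝ) (hε0 : 0 ≤ ε) (hε1 : ε ≤ 1/2) (u0 u1 v0 v1 : ℝ)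
    (hu0 : 0 ≤ u0) (hu1 : 0 ≤ u1) (hv0 : 0 ≤ v0) (hv1 : 0 ≤ v1) :
    (1-ε)/2*(u0*v0+u1*v1) + ε/2*(u0*v1+u1*v0)
      ≤ ((u0^(2-2*ε)+u1^(2-2*ε))/2)^(1/(2-2*ε)) * ((v0^(2-2*ε)+v1^(2-2*ε))/2)^(1/(2-2*ε)) := by
  set Nu : ℝ := ((u0^(2-2*ε)+u1^(2-2*ε))/2)^(1/(2-2*ε)) with hNu
  set Nv : ℝ := ((v0^(2-2*ε)+v1^(2-2*ε))/2)^(1/(2-2*ε)) with hNv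
  have hNunn : 0 ≤ Nu := by
    apply Real.rpow_nonneg
    have := Real.rpow_nonneg hu0 (2-2*ε); have := Real.rpow_nonneg hu1 (2-2*ε); linarith
  have hNvnn : 0 ≤ Nv := by
    apply Real.rpow_nonneg
    have := Real.rpow_nonneg hv0 (2-2*ε); have := Real.rpow_nonneg hv1 (2-2*ε); linarith
  set a : ℝ := (u0+u1)/2
  set b : ℝ := (u0-u1)/2
  set c : ℝ := (v0+v1)/2
  set d : ℝ := (v0-v1)/2
  have hqu := quad' ε hε0 hε1 u0 u1 hu0 hu1
  have hqv := quad' ε hε0 hε1 v0 v1 hv0 hv1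
  have hrho : (0:ℝ) ≤ 1-2*ε := by linarith
  have hid : (1-ε)/2*(u0*v0+u1*v1) + ε/2*(u0*v1+u1*v0) = a*c + (1-2*ε)*(b*d) := by
    simp only [a, b, c, d]; ring
  rw [hid]
  apply le_of_sq_le_sq' _ _ (mul_nonneg hNunn hNvnn)
  have hcs : (a*c + (1-2*ε)*(b*d))^2 ≤ (a^2+(1-2*ε)*b^2) * (c^2+(1-2*ε)*d^2) := by
    nlinarith [sq_nonneg (a*d - b*c), sq_nonneg (a*d + b*c), mul_nonneg hrho hrho,
      sq_nonneg (b*d), sq_nonneg (a*c)]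
  have h1 : (0:ℝ) ≤ c^2+(1-2*ε)*d^2 := by positivity
  have h2 : (0:ℝ) ≤ a^2+(1-2*ε)*b^2 := by positivity
  calc (a*c + (1-2*ε)*(b*d))^2 ≤ (a^2+(1-2*ε)*b^2) * (c^2+(1-2*ε)*d^2) := hcs
    _ ≤ Nu^2 * Nv^2 := by
        apply mul_le_mul hqu hqv h1 (sq_nonneg Nu)
    _ = (Nu*Nv)^2 := by ring

lemma sum_succ {n : ℕ} (h : (Fin (n+1) → Bool) → ℝ) :
    ∑ x : Fin (n+1) → Bool, h x = ∑ b : Bool, ∑ x : Fin n → Bool, h (Fin.cons b x) := by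
  rw [← (Fintype.sum_equiv (Fin.consEquiv fun _ => Bool)
    (fun q => h (Fin.cons q.1 q.2)) h (fun q => rfl))]
  exact Fintype.sum_prod_type _

lemma pw_cons (ε : ℝ) {n : ℕ} (b c : Bool) (x y : Fin n → Bool) :
    pairWeight ε (Fin.cons b x) (Fin.cons c y)
      = (if b = c then (1-ε)/2 else ε/2) * pairWeight ε x y := by
  unfold pairWeight
  rw [Fin.prod_univ_succ]
  simp [Fin.cons_zero, Fin.cons_succ]

lemma pw_nonneg (ε : ℝ) (hε0 : 0 ≤ ε) (hε1 : ε ≤ 1/2) {n : ℕ} (x y : Fin n → Bool) :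
    0 ≤ pairWeight ε x y := by
  unfold pairWeight
  apply Finset.prod_nonneg
  intro i _
  split <;> linarith

lemma tensor (ε : ℝ) (hε0 : 0 ≤ ε) (hε1 : ε ≤ 1/2) (n : ℕ)
    (F G : (Fin n → Bool) → ℝ) (hF : ∀ x, 0 ≤ F x) (hG : ∀ y, 0 ≤ G y) :
    ∑ x : Fin n → Bool, ∑ y : Fin n → Bool, pairWeight ε x y * (F x * G y)
      ≤ ((∑ x : Fin n → Bool, F x ^ (2-2*ε)) / 2^n)^(1/(2-2*ε))
        * ((∑ y : Fin n → Bool, G y ^ (2-2*ε)) / 2^n)^(1/(2-2*ε)) := by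
  set p : ℝ := 2-2*ε with hp
  have hppos : 0 < p := by rw [hp]; linarith
  induction n with
  | zero =>
    simp only [pow_zero, div_one]
    rw [Finset.sum_eq_single_of_mem (default : Fin 0 → Bool) (Finset.mem_univ _)
      (fun b _ hb => absurd (Subsingleton.elim b default) hb),
      Finset.sum_eq_single_of_mem (default : Fin 0 → Bool) (Finset.mem_univ _)
      (fun b _ hb => absurd (Subsingleton.elim b default) hb),
      Finset.sum_eq_single_of_mem (default : Fin 0 → Bool) (Finset.mem_univ _)
      (fun b _ hb => absurd (Subsingleton.elim b default) hb),
      Finset.sum_eq_single_of_mem (default : Fin 0 → Bool) (Finset.mem_univ _)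
      (fun b _ hb => absurd (Subsingleton.elim b default) hb)]
    have hpw : pairWeight ε (default : Fin 0 → Bool) default = 1 := by
      unfold pairWeight; simp
    rw [hpw, one_mul, ← Real.rpow_mul (hF default), ← Real.rpow_mul (hG default),
      mul_one_div_cancel hppos.ne', Real.rpow_one, Real.rpow_one]
  | succ m ih =>
    set w1 : Bool → Bool → ℝ := fun b c => if b = c then (1-ε)/2 else ε/2 with hw1
    have hw1nn : ∀ b c, 0 ≤ w1 b c := fun b c => by
      rw [hw1]; dsimp only; split <;> linarith
    set Nf : Bool → ℝ := fun b => ((∑ x : Fin m → Bool, F (Fin.cons b x) ^ p)/2^m)^(1/p)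
      with hNf
    set Ng : Bool → ℝ := fun c => ((∑ y : Fin m → Bool, G (Fin.cons c y) ^ p)/2^m)^(1/p)
      with hNg
    have hNfnn : ∀ b, 0 ≤ Nf b := fun b => Real.rpow_nonneg (div_nonneg
      (Finset.sum_nonneg fun x _ => Real.rpow_nonneg (hF _) _) (by positivity)) _
    have hNgnn : ∀ c, 0 ≤ Ng c := fun c => Real.rpow_nonneg (div_nonneg
      (Finset.sum_nonneg fun y _ => Real.rpow_nonneg (hG _) _) (by positivity)) _
    have expand : (∑ x : Fin (m+1) → Bool, ∑ y : Fin (m+1) → Bool,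
          pairWeight ε x y * (F x * G y))
        = ∑ b : Bool, ∑ c : Bool, w1 b c * ∑ x : Fin m → Bool, ∑ y : Fin m → Bool,
            pairWeight ε x y * (F (Fin.cons b x) * G (Fin.cons c y)) := by
      rw [sum_succ (fun x => ∑ y, pairWeight ε x y * (F x * G y))]
      refine Finset.sum_congr rfl fun b _ => ?_
      have inner : ∀ x : Fin m → Bool,
          (∑ y : Fin (m+1) → Bool, pairWeight ε (Fin.cons b x) y * (F (Fin.cons b x) * G y))
          = ∑ c : Bool, ∑ y : Fin m → Bool,
              w1 b c * (pairWeight ε x y * (F (Fin.cons b x) * G (Fin.cons c y))) := by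
        intro x
        rw [sum_succ (fun y => pairWeight ε (Fin.cons b x) y * (F (Fin.cons b x) * G y))]
        refine Finset.sum_congr rfl fun c _ => Finset.sum_congr rfl fun y _ => ?_
        rw [pw_cons]; rw [hw1]; ring
      simp_rw [inner]
      rw [Finset.sum_comm]
      refine Finset.sum_congr rfl fun c _ => ?_
      rw [Finset.mul_sum]
      refine Finset.sum_congr rfl fun x _ => ?_
      rw [Finset.mul_sum]
    have hbd : ∀ b c, (∑ x : Fin m → Bool, ∑ y : Fin m → Bool,
          pairWeight ε x y * (F (Fin.cons b x) * G (Fin.cons c y))) ≤ Nf b * Ng c :=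
      fun b c => ih (fun x => F (Fin.cons b x)) (fun y => G (Fin.cons c y))
        (fun x => hF _) (fun y => hG _)
    have hNfp : ∀ b, Nf b ^ p = (∑ x : Fin m → Bool, F (Fin.cons b x) ^ p)/2^m := by
      intro b
      rw [hNf]; dsimp only
      rw [← Real.rpow_mul (div_nonneg
          (Finset.sum_nonneg fun x _ => Real.rpow_nonneg (hF _) _) (by positivity)),
        one_div_mul_cancel hppos.ne', Real.rpow_one]
    have hNgp : ∀ c, Ng c ^ p = (∑ y : Fin m → Bool, G (Fin.cons c y) ^ p)/2^m := by
      intro c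
      rw [hNg]; dsimp only
      rw [← Real.rpow_mul (div_nonneg
          (Finset.sum_nonneg fun y _ => Real.rpow_nonneg (hG _) _) (by positivity)),
        one_div_mul_cancel hppos.ne', Real.rpow_one]
    have hsF : (∑ x : Fin (m+1) → Bool, F x ^ p)
        = (∑ x : Fin m → Bool, F (Fin.cons true x) ^ p)
          + (∑ x : Fin m → Bool, F (Fin.cons false x) ^ p) := by
      rw [sum_succ (fun x => F x ^ p), Fintype.sum_bool]
    have hsG : (∑ y : Fin (m+1) → Bool, G y ^ p)
        = (∑ y : Fin m → Bool, G (Fin.cons true y) ^ p)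
          + (∑ y : Fin m → Bool, G (Fin.cons false y) ^ p) := by
      rw [sum_succ (fun y => G y ^ p), Fintype.sum_bool]
    calc (∑ x : Fin (m+1) → Bool, ∑ y : Fin (m+1) → Bool, pairWeight ε x y * (F x * G y))
        = ∑ b : Bool, ∑ c : Bool, w1 b c * ∑ x : Fin m → Bool, ∑ y : Fin m → Bool,
            pairWeight ε x y * (F (Fin.cons b x) * G (Fin.cons c y)) := expand
      _ ≤ ∑ b : Bool, ∑ c : Bool, w1 b c * (Nf b * Ng c) := by
          refine Finset.sum_le_sum fun b _ => Finset.sum_le_sum fun c _ => ?_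
          exact mul_le_mul_of_nonneg_left (hbd b c) (hw1nn b c)
      _ = (1-ε)/2*(Nf true*Ng true + Nf false*Ng false)
            + ε/2*(Nf true*Ng false + Nf false*Ng true) := by
          rw [Fintype.sum_bool, Fintype.sum_bool, Fintype.sum_bool, hw1]
          norm_num
          ring
      _ ≤ ((Nf true^p + Nf false^p)/2)^(1/p) * ((Ng true^p + Ng false^p)/2)^(1/p) := by
          rw [hp]
          exact onebit ε hε0 hε1 _ _ _ _ (hNfnn true) (hNfnn false) (hNgnn true) (hNgnn false)
      _ = ((∑ x : Fin (m+1) → Bool, F x ^ p) / 2^(m+1))^(1/p)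
            * ((∑ y : Fin (m+1) → Bool, G y ^ p) / 2^(m+1))^(1/p) := by
          rw [hNfp, hNfp, hNgp, hNgp, hsF, hsG]
          congr 2 <;> · rw [pow_succ]; field_simp

lemma outDist_nonneg {n k : ℕ} (f : (Fin n → Bool) → (Fin k → Bool)) (z : Fin k → Bool) :
    0 ≤ outDist f z := by
  unfold outDist
  apply div_nonneg _ (by positivity)
  apply Finset.sum_nonneg
  intro x _
  split <;> norm_num

lemma outDist_sum {n k : ℕ} (f : (Fin n → Bool) → (Fin k → Bool)) :
    ∑ z : Fin k → Bool, outDist f z = 1 := by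
  unfold outDist
  rw [← Finset.sum_div, Finset.sum_comm]
  have : ∀ x : Fin n → Bool, (∑ z : Fin k → Bool, if f x = z then (1:ℝ) else 0) = 1 := by
    intro x
    rw [Finset.sum_ite_eq]
    simp
  rw [Finset.sum_congr rfl fun x _ => this x, Finset.sum_const, Finset.card_univ]
  simp

set_option maxHeartbeats 1000000 in
theorem stmt1 {n k : ℕ} (ε t : ℝ) (hε0 : 0 ≤ ε) (hε1 : ε ≤ 1 / 2) (ht : 0 ≤ t)
    (f g : (Fin n → Bool) → (Fin k → Bool))
    (hf : ∀ z, outDist f z ≤ (2 : ℝ) ^ (-t))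
    (hg : ∀ z, outDist g z ≤ (2 : ℝ) ^ (-t)) :
    prPair ε (fun x y => f x = g y) ≤ (2 : ℝ) ^ (-(t * ε) / (1 - ε)) := by
  classical
  set p : ℝ := 2-2*ε with hp
  have hppos : 0 < p := by rw [hp]; linarith
  have hp2 : p ≤ 2 := by rw [hp]; linarith
  set δ : ℝ := (2:ℝ)^(-t) with hδ
  have hδpos : 0 < δ := Real.rpow_pos_of_pos two_pos _
  -- rewrite prPair as a sum over outputs z
  have key : ∀ (x y : Fin n → Bool) (inst : Decidable (f x = g y)),
      (@ite _ (f x = g y) inst (pairWeight ε x y) 0)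
      = ∑ z : Fin k → Bool,
          pairWeight ε x y * ((if f x = z then (1:ℝ) else 0) * (if g y = z then (1:ℝ) else 0)) := by
    intro x y inst
    have hterm : ∀ z : Fin k → Bool,
        pairWeight ε x y * ((if f x = z then (1:ℝ) else 0) * (if g y = z then (1:ℝ) else 0))
        = if f x = z then (if g y = z then pairWeight ε x y else 0) else 0 := by
      intro z
      by_cases h1 : f x = z <;> by_cases h2 : g y = z <;> simp [h1, h2]
    rw [Finset.sum_congr rfl fun z _ => hterm z, Finset.sum_ite_eq]
    by_cases h : f x = g y
    · simp [h]
    · simp only [Finset.mem_univ, if_true, if_neg h,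
        if_neg (show ¬ g y = f x from fun hh => h hh.symm)]
  have hre : prPair ε (fun x y => f x = g y)
      = ∑ z : Fin k → Bool, ∑ x : Fin n → Bool, ∑ y : Fin n → Bool,
          pairWeight ε x y * ((if f x = z then (1:ℝ) else 0) * (if g y = z then (1:ℝ) else 0)) := by
    unfold prPair
    refine ((Finset.sum_congr rfl fun x _ => Finset.sum_congr rfl fun y _ => key x y _).trans ?_)
    refine (Finset.sum_congr rfl fun x _ => Finset.sum_comm).trans ?_
    exact Finset.sum_comm
  -- bound each z-term using the tensorized hypercontractive inequality
  have hz : ∀ z : Fin k → Bool,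
      (∑ x : Fin n → Bool, ∑ y : Fin n → Bool,
        pairWeight ε x y * ((if f x = z then (1:ℝ) else 0) * (if g y = z then (1:ℝ) else 0)))
      ≤ (outDist f z)^(1/p) * (outDist g z)^(1/p) := by
    intro z
    have hF : ∀ x, (0:ℝ) ≤ (if f x = z then (1:ℝ) else 0) := fun x => by split <;> norm_num
    have hG : ∀ y, (0:ℝ) ≤ (if g y = z then (1:ℝ) else 0) := fun y => by split <;> norm_num
    have hpow : ∀ x : Fin n → Bool,
        ((if f x = z then (1:ℝ) else 0)) ^ (2-2*ε) = (if f x = z then (1:ℝ) else 0) := by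
      intro x
      split
      · exact Real.one_rpow _
      · exact Real.zero_rpow (by rw [← hp]; exact hppos.ne')
    have hpow' : ∀ y : Fin n → Bool,
        ((if g y = z then (1:ℝ) else 0)) ^ (2-2*ε) = (if g y = z then (1:ℝ) else 0) := by
      intro y
      split
      · exact Real.one_rpow _
      · exact Real.zero_rpow (by rw [← hp]; exact hppos.ne')
    have := tensor ε hε0 hε1 n _ _ hF hG
    rw [Finset.sum_congr rfl fun x _ => hpow x, Finset.sum_congr rfl fun y _ => hpow' y] at this
    rw [← hp] at this
    exact this
  rw [hre]
  -- main summation bound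
  set e : ℝ := 1/p - 1/2 with he
  have henn : 0 ≤ e := by
    rw [he]
    have : 1/2 ≤ 1/p := by
      apply one_div_le_one_div_of_le hppos hp2
    linarith
  have hsum1 : ∑ z : Fin k → Bool, outDist f z = 1 := outDist_sum f
  have hsum2 : ∑ z : Fin k → Bool, outDist g z = 1 := outDist_sum g
  have hCS : (∑ z : Fin k → Bool, Real.sqrt (outDist f z) * Real.sqrt (outDist g z)) ≤ 1 := by
    have hsq := Finset.sum_sq_le_sum_mul_sum_of_sq_eq_mul Finset.univ
      (f := fun z => outDist f z) (g := fun z => outDist g z)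
      (r := fun z => Real.sqrt (outDist f z) * Real.sqrt (outDist g z))
      (fun z _ => outDist_nonneg f z) (fun z _ => outDist_nonneg g z)
      (fun z _ => by rw [mul_pow, Real.sq_sqrt (outDist_nonneg f z),
        Real.sq_sqrt (outDist_nonneg g z)])
    rw [hsum1, hsum2, mul_one] at hsq
    have hnn : 0 ≤ ∑ z : Fin k → Bool, Real.sqrt (outDist f z) * Real.sqrt (outDist g z) :=
      Finset.sum_nonneg fun z _ => mul_nonneg (Real.sqrt_nonneg _) (Real.sqrt_nonneg _)
    nlinarith
  have hzz : ∀ z : Fin k → Bool, (outDist f z)^(1/p) * (outDist g z)^(1/p)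
      ≤ (Real.sqrt (outDist f z) * Real.sqrt (outDist g z)) * ((δ*δ)^e) := by
    intro z
    have hα := outDist_nonneg f z
    have hβ := outDist_nonneg g z
    have hαβ : 0 ≤ outDist f z * outDist g z := mul_nonneg hα hβ
    rw [← Real.mul_rpow hα hβ]
    have h12 : (1/2 : ℝ) + e = 1/p := by rw [he]; ring
    have hsplit : (outDist f z * outDist g z)^(1/p)
        = (outDist f z * outDist g z)^(1/2 : ℝ) * (outDist f z * outDist g z)^e := by
      rw [← Real.rpow_add' hαβ (by rw [h12]; exact one_div_ne_zero hppos.ne'), h12]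
    rw [hsplit]
    calc (outDist f z * outDist g z)^(1/2 : ℝ) * (outDist f z * outDist g z)^e
        = (Real.sqrt (outDist f z) * Real.sqrt (outDist g z)) * (outDist f z * outDist g z)^e := by
          rw [← Real.sqrt_eq_rpow, Real.sqrt_mul hα]
      _ ≤ (Real.sqrt (outDist f z) * Real.sqrt (outDist g z)) * ((δ*δ)^e) := by
          apply mul_le_mul_of_nonneg_left
            (Real.rpow_le_rpow hαβ (mul_le_mul (hf z) (hg z) hβ hδpos.le) henn)
            (mul_nonneg (Real.sqrt_nonneg _) (Real.sqrt_nonneg _))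
  calc (∑ z : Fin k → Bool, ∑ x : Fin n → Bool, ∑ y : Fin n → Bool,
        pairWeight ε x y * ((if f x = z then (1:ℝ) else 0) * (if g y = z then (1:ℝ) else 0)))
      ≤ ∑ z : Fin k → Bool, (outDist f z)^(1/p) * (outDist g z)^(1/p) :=
        Finset.sum_le_sum fun z _ => hz z
    _ ≤ ∑ z : Fin k → Bool, (Real.sqrt (outDist f z) * Real.sqrt (outDist g z)) * ((δ*δ)^e) :=
        Finset.sum_le_sum fun z _ => hzz z
    _ = (∑ z : Fin k → Bool, Real.sqrt (outDist f z) * Real.sqrt (outDist g z)) * ((δ*δ)^e) := by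
        rw [Finset.sum_mul]
    _ ≤ 1 * ((δ*δ)^e) := by
        apply mul_le_mul_of_nonneg_right hCS (Real.rpow_nonneg (by positivity) _)
    _ = (2 : ℝ) ^ (-(t * ε) / (1 - ε)) := by
        rw [one_mul, hδ, ← Real.rpow_add two_pos, ← Real.rpow_mul (by norm_num : (0:ℝ) ≤ 2)]
        congr 1
        rw [he, hp]
        have h1 : (1:ℝ) - ε ≠ 0 := by intro hc; rw [sub_eq_zero] at hc; linarith
        have h2 : (2:ℝ) - 2*ε ≠ 0 := by intro hc; apply h1; linarith
        field_simp
        ring
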